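/- Let H₁, H₂, H₋, H₊ be complex Banach spaces, I ⊆ ℝ an open interval, and for t ∈ I let P(t) : H₁ → H₂, R₋(t) : H₋ → H₂, R₊(t) : H₁ → H₊ be bounded operators depending on t, each differentiable (in operator norm) at t₀ ∈ I. Suppose that for each t ∈ I the Grushin problem 𝒫(t)(u, u₋) = (P(t) u + R₋(t) u₋, R₊(t) u) is well posed, and that the inverse blocks E(t), E₊(t), E₋(t), E₋₊(t) are each differentiable at t₀. Then, with ′ denoting the derivative at t₀ and suppressing the argument t₀, one has E₋ ∘ P′ ∘ E₊ = −E₋₊′ − E₋ ∘ R₋′ ∘ E₋₊ − E₋₊ ∘ R₊′ ∘ E₊. -/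

import Mathlib

private lemma compBBM {E F G : Type*}
    [NormedAddCommGroup E] [NormedSpace ℂ E]
    [NormedAddCommGroup F] [NormedSpace ℂ F]
    [NormedAddCommGroup G] [NormedSpace ℂ G] :
    IsBoundedBilinearMap ℝ fun p : (F →L[ℂ] G) × (E →L[ℂ] F) => p.1.comp p.2 where
  add_left x₁ x₂ y := by ext v; simp
  smul_left c x y := by ext v; simp
  add_right x y₁ y₂ := by ext v; simp
  smul_right c x y := by ext v; simp
  bound := ⟨1, one_pos, fun x y => by
    simpa using ContinuousLinearMap.opNorm_comp_le x y⟩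

private lemma hasDerivAt_clm_comp' {E F G : Type*}
    [NormedAddCommGroup E] [NormedSpace ℂ E]
    [NormedAddCommGroup F] [NormedSpace ℂ F]
    [NormedAddCommGroup G] [NormedSpace ℂ G]
    {c : ℝ → F →L[ℂ] G} {c' : F →L[ℂ] G}
    {d : ℝ → E →L[ℂ] F} {d' : E →L[ℂ] F} {t₀ : ℝ}
    (hc : HasDerivAt c c' t₀) (hd : HasDerivAt d d' t₀) :
    HasDerivAt (fun t => (c t).comp (d t)) (c'.comp (d t₀) + (c t₀).comp d') t₀ := by
  have hB := (compBBM (E := E) (F := F) (G := G)).hasFDerivAt (c t₀, d t₀)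
  have h := hB.comp_hasDerivAt t₀ (HasDerivAt.prodMk hc hd)
  simp [IsBoundedBilinearMap.deriv_apply, add_comm] at h
  exact h


/-- Differentiating a family of well-posed Grushin problems at `t₀` yields
`E₋ P′ E₊ = −E₋₊′ − E₋ R₋′ E₋₊ − E₋₊ R₊′ E₊` (all evaluated at `t₀`). -/
theorem stmt_19
    {H₁ H₂ Hm Hp : Type*}
    [NormedAddCommGroup H₁] [NormedSpace ℂ H₁] [CompleteSpace H₁]
    [NormedAddCommGroup H₂] [NormedSpace ℂ H₂] [CompleteSpace H₂]
    [NormedAddCommGroup Hm] [NormedSpace ℂ Hm] [CompleteSpace Hm]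
    [NormedAddCommGroup Hp] [NormedSpace ℂ Hp] [CompleteSpace Hp]
    (a b t₀ : ℝ) (ht₀ : t₀ ∈ Set.Ioo a b)
    (P : ℝ → H₁ →L[ℂ] H₂) (Rm : ℝ → Hm →L[ℂ] H₂) (Rp : ℝ → H₁ →L[ℂ] Hp)
    (E : ℝ → H₂ →L[ℂ] H₁) (Ep : ℝ → Hp →L[ℂ] H₁)
    (Em : ℝ → H₂ →L[ℂ] Hm) (Emp : ℝ → Hp →L[ℂ] Hm)
    (P' : H₁ →L[ℂ] H₂) (Rm' : Hm →L[ℂ] H₂) (Rp' : H₁ →L[ℂ] Hp)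
    (E' : H₂ →L[ℂ] H₁) (Ep' : Hp →L[ℂ] H₁) (Em' : H₂ →L[ℂ] Hm) (Emp' : Hp →L[ℂ] Hm)
    (hP : HasDerivAt P P' t₀) (hRm : HasDerivAt Rm Rm' t₀)
    (hRp : HasDerivAt Rp Rp' t₀)
    (hE : HasDerivAt E E' t₀) (hEp : HasDerivAt Ep Ep' t₀)
    (hEm : HasDerivAt Em Em' t₀) (hEmp : HasDerivAt Emp Emp' t₀)
    -- for each `t` in the interval, the Grushin problem is well posed with the
    -- inverse blocks `E t, E₊ t, E₋ t, E₋₊ t`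
    (hwell : ∀ t ∈ Set.Ioo a b,
      (∀ (v : H₂) (vp : Hp),
        P t (E t v + Ep t vp) + Rm t (Em t v + Emp t vp) = v ∧
        Rp t (E t v + Ep t vp) = vp) ∧
      (∀ (u : H₁) (um : Hm),
        E t (P t u + Rm t um) + Ep t (Rp t u) = u ∧
        Em t (P t u + Rm t um) + Emp t (Rp t u) = um)) :
    (Em t₀).comp (P'.comp (Ep t₀)) =
      -Emp' - (Em t₀).comp (Rm'.comp (Emp t₀)) -
        (Emp t₀).comp (Rp'.comp (Ep t₀)) := by
  classical
  obtain ⟨h1, h2⟩ := hwell t₀ ht₀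
  have key1 : (P t₀).comp (Ep t₀) + (Rm t₀).comp (Emp t₀) = 0 := by
    ext vp
    have := (h1 0 vp).1
    simpa using this
  have key2 : (Rp t₀).comp (Ep t₀) = ContinuousLinearMap.id ℂ Hp := by
    ext vp
    have := (h1 0 vp).2
    simpa using this
  have key3 : (Em t₀).comp (P t₀) + (Emp t₀).comp (Rp t₀) = 0 := by
    ext u
    have := (h2 u 0).2
    simpa using this
  have key4 : (Em t₀).comp (Rm t₀) = ContinuousLinearMap.id ℂ Hm := by
    ext um
    have := (h2 0 um).2
    simpa using this
  set f : ℝ → Hp →L[ℂ] Hm := fun t =>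
    (Em t).comp ((P t).comp (Ep t)) + (Em t).comp ((Rm t).comp (Emp t)) +
      (Emp t).comp ((Rp t).comp (Ep t)) with hf
  have hfd : HasDerivAt f
      (Em'.comp ((P t₀).comp (Ep t₀)) +
        (Em t₀).comp (P'.comp (Ep t₀) + (P t₀).comp Ep') +
       (Em'.comp ((Rm t₀).comp (Emp t₀)) +
        (Em t₀).comp (Rm'.comp (Emp t₀) + (Rm t₀).comp Emp')) +
       (Emp'.comp ((Rp t₀).comp (Ep t₀)) +
        (Emp t₀).comp (Rp'.comp (Ep t₀) + (Rp t₀).comp Ep'))) t₀ :=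
    ((hasDerivAt_clm_comp' hEm (hasDerivAt_clm_comp' hP hEp)).add (hasDerivAt_clm_comp' hEm (hasDerivAt_clm_comp' hRm hEmp))).add
      (hasDerivAt_clm_comp' hEmp (hasDerivAt_clm_comp' hRp hEp))
  have heq : f =ᶠ[nhds t₀] Emp := by
    filter_upwards [Ioo_mem_nhds ht₀.1 ht₀.2] with t ht
    obtain ⟨g1, g2⟩ := hwell t ht
    ext vp
    have := (g2 (Ep t vp) (Emp t vp)).2
    simpa [hf, map_add, add_assoc] using this
  have hf2 : HasDerivAt f Emp' t₀ := hEmp.congr_of_eventuallyEq heq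
  have main := hfd.unique hf2
  simp only [ContinuousLinearMap.comp_add] at main
  have t1 : Em'.comp ((P t₀).comp (Ep t₀)) = -(Em'.comp ((Rm t₀).comp (Emp t₀))) := by
    apply eq_neg_of_add_eq_zero_left
    rw [← ContinuousLinearMap.comp_add, key1, ContinuousLinearMap.comp_zero]
  have t2 : (Em t₀).comp ((P t₀).comp Ep') = -((Emp t₀).comp ((Rp t₀).comp Ep')) := by
    apply eq_neg_of_add_eq_zero_left
    rw [← ContinuousLinearMap.comp_assoc, ← ContinuousLinearMap.comp_assoc,
      ← ContinuousLinearMap.add_comp, key3, ContinuousLinearMap.zero_comp]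
  have t3 : (Em t₀).comp ((Rm t₀).comp Emp') = Emp' := by
    rw [← ContinuousLinearMap.comp_assoc, key4, ContinuousLinearMap.id_comp]
  have t4 : Emp'.comp ((Rp t₀).comp (Ep t₀)) = Emp' := by
    rw [key2, ContinuousLinearMap.comp_id]
  rw [t1, t2, t3, t4] at main
  linear_combination (norm := abel) main
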